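/- For k, ℓ ∈ N and a ∈ k (char k = p > 2), the algebra G(k,ℓ,a) = k⟨x,y⟩/(yx − xy + (1/2)x², y^{p^k} − a x^{p^k}, x^{p^ℓ}) has linear basis {x^i y^j : 0 ≤ i ≤ p^ℓ − 1, 0 ≤ j ≤ p^k − 1}, hence dimension p^{k+ℓ}. -/

import Mathlib

section AbstractCommutation
variable {K : Type*} [Field K] {R : Type*} [Ring R] [Algebra K R]
variable {p : ℕ} [Fact p.Prime] [CharP K p]
variable {X Y : R}

theorem gaux1 (hR : Y * X = X * Y - (1/2 : K) • X^2) (j : ℕ) :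
    Y * X^j = X^j * Y - ((j : K)/2) • X^(j+1) := by
  induction j with
  | zero => simp
  | succ j ih =>
    have : Y * X ^ (j+1) = (Y * X^j) * X := by rw [pow_succ, ← mul_assoc]
    rw [this, ih, sub_mul, smul_mul_assoc, ← pow_succ, mul_assoc, hR, mul_sub,
      mul_smul_comm, ← mul_assoc, ← pow_succ, ← pow_add]
    rw [sub_sub, ← add_smul]
    congr 1
    push_cast; ring

theorem gaux_comm (hR : Y * X = X * Y - (1/2 : K) • X^2) [Nontrivial R] :
    Commute X (Y ^ p) := by
  classical
  have hp : p.Prime := Fact.out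
  haveI : CharP (Module.End K R) p := charP_of_injective_algebraMap' (A := Module.End K R) K p
  set L := LinearMap.mulLeft K Y with hL
  set Rr := LinearMap.mulRight K Y with hRr
  have hcomm : Commute L Rr := by
    ext z
    simp [hL, hRr, mul_assoc]
  set c : ℕ → K := fun n => (-(2⁻¹ : K))^n * (n.factorial : K) with hc
  have key : ∀ n : ℕ, ((L - Rr)^n) X = c n • X^(n+1) := by
    intro n
    induction n with
    | zero => simp [hc]
    | succ n ih =>
      rw [pow_succ', Module.End.mul_apply, ih, map_smul]
      have : (L - Rr) (X ^ (n+1)) = Y * X^(n+1) - X^(n+1) * Y := by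
        simp [hL, hRr]
      rw [this, gaux1 hR (n+1)]
      rw [sub_sub_cancel_left, ← neg_smul, smul_smul]
      have hcs : c n * -((↑(n+1) : K)/2) = c (n+1) := by
        simp only [hc, Nat.factorial_succ]
        push_cast
        ring
      rw [hcs]
  have hend : (L - Rr)^p = LinearMap.mulLeft K (Y^p) - LinearMap.mulRight K (Y^p) := by
    rw [sub_pow_char_of_commute p hcomm, LinearMap.pow_mulLeft, LinearMap.pow_mulRight]
  have hcp : c p = 0 := by
    simp only [hc]
    have : (p.factorial : K) = 0 := by
      rw [CharP.cast_eq_zero_iff K p]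
      exact Nat.dvd_factorial hp.pos le_rfl
    rw [this, mul_zero]
  have := key p
  rw [hend, hcp, zero_smul] at this
  have h2 : Y^p * X - X * Y^p = 0 := by
    simpa [LinearMap.sub_apply] using this
  exact (sub_eq_zero.mp h2).symm

theorem gaux_comm_pow (hR : Y * X = X * Y - (1/2 : K) • X^2) [Nontrivial R] (k : ℕ)
    (hk : 1 ≤ k) : Commute X (Y ^ p ^ k) := by
  have : Y ^ p ^ k = (Y ^ p) ^ p ^ (k-1) := by
    rw [← pow_mul]
    congr 1
    rw [← pow_succ']
    congr 1
    omega
  rw [this]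
  exact (gaux_comm hR).pow_right _

end AbstractCommutation

section Model
variable (K : Type*) [Field K] (N M : ℕ) (a : K)

/-- basis vectors with automatic truncation out of range -/
noncomputable def gE (i j : ℕ) : (Fin N × Fin M) →₀ K :=
  if h : i < N ∧ j < M then Finsupp.single (⟨i, h.1⟩, ⟨j, h.2⟩) 1 else 0

noncomputable def gX : ((Fin N × Fin M) →₀ K) →ₗ[K] ((Fin N × Fin M) →₀ K) :=
  Finsupp.linearCombination K (fun q => gE K N M ((q.1 : ℕ)+1) (q.2 : ℕ))

noncomputable def gY : ((Fin N × Fin M) →₀ K) →ₗ[K] ((Fin N × Fin M) →₀ K) :=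
  Finsupp.linearCombination K (fun q =>
    (if ((q.2 : ℕ))+1 < M then gE K N M (q.1 : ℕ) ((q.2 : ℕ)+1)
      else a • gE K N M ((q.1 : ℕ)+M) 0)
    - (((q.1 : ℕ) : K)/2) • gE K N M ((q.1 : ℕ)+1) (q.2 : ℕ))

theorem gE_eq {i j : ℕ} (hi : i < N) (hj : j < M) :
    gE K N M i j = Finsupp.single ((⟨i, hi⟩ : Fin N), (⟨j, hj⟩ : Fin M)) 1 := by
  rw [gE, dif_pos ⟨hi, hj⟩]

theorem gE_zero {i j : ℕ} (h : N ≤ i ∨ M ≤ j) : gE K N M i j = 0 := by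
  rw [gE, dif_neg]
  omega

theorem single_eq_gE (q : Fin N × Fin M) :
    Finsupp.single q (1 : K) = gE K N M (q.1 : ℕ) (q.2 : ℕ) := by
  rw [gE_eq K N M q.1.isLt q.2.isLt]

theorem gX_apply (i j : ℕ) : gX K N M (gE K N M i j) = gE K N M (i+1) j := by
  by_cases h : i < N ∧ j < M
  · rw [gE_eq K N M h.1 h.2, gX, Finsupp.linearCombination_single, one_smul]
  · rw [gE_zero K N M (by omega), map_zero, gE_zero K N M (by omega)]

theorem gX_pow (m i j : ℕ) : (gX K N M ^ m) (gE K N M i j) = gE K N M (i+m) j := by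
  induction m generalizing i with
  | zero => simp
  | succ m ih =>
    rw [pow_succ', Module.End.mul_apply, ih, gX_apply, add_assoc]

theorem gY_apply1 {i j : ℕ} (hj : j + 1 < M) :
    gY K N M a (gE K N M i j) = gE K N M i (j+1) - ((i : K)/2) • gE K N M (i+1) j := by
  by_cases h : i < N
  · rw [gE_eq K N M h (by omega), gY, Finsupp.linearCombination_single, one_smul]
    simp only [Fin.val_mk]
    rw [if_pos hj]
  · rw [gE_zero K N M (by omega), map_zero, gE_zero K N M (Or.inl (by omega)),
      gE_zero K N M (Or.inl (by omega)), smul_zero, sub_zero]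

theorem gY_apply2 {i : ℕ} (hM : 0 < M) :
    gY K N M a (gE K N M i (M-1))
      = a • gE K N M (i+M) 0 - ((i : K)/2) • gE K N M (i+1) (M-1) := by
  by_cases h : i < N
  · rw [gE_eq K N M h (by omega), gY, Finsupp.linearCombination_single, one_smul]
    simp only [Fin.val_mk]
    rw [if_neg (by omega)]
  · rw [gE_zero K N M (by omega), map_zero, gE_zero K N M (Or.inl (by omega)),
      gE_zero K N M (Or.inl (by omega)), smul_zero, smul_zero, sub_zero]

/-- the main commutation relation, as an identity in the endomorphism algebra -/
theorem gRel1 (hM : 0 < M) :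
    gY K N M a * gX K N M
      = gX K N M * gY K N M a - (1/2 : K) • (gX K N M) ^ 2 := by
  apply Finsupp.lhom_ext
  intro q b
  obtain ⟨⟨i, hiN⟩, ⟨j, hjM⟩⟩ := q
  have hb : Finsupp.single ((⟨i, hiN⟩ : Fin N), (⟨j, hjM⟩ : Fin M)) b
      = b • Finsupp.single ((⟨i, hiN⟩ : Fin N), (⟨j, hjM⟩ : Fin M)) (1 : K) := by
    rw [Finsupp.smul_single, smul_eq_mul, mul_one]
  rw [hb, map_smul, map_smul, ← gE_eq K N M hiN hjM]
  congr 1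
  rw [LinearMap.sub_apply, Module.End.mul_apply, Module.End.mul_apply, gX_apply,
    LinearMap.smul_apply, pow_two, Module.End.mul_apply, gX_apply, gX_apply]
  by_cases hj : j + 1 < M
  · rw [gY_apply1 K N M a hj, gY_apply1 K N M a hj, map_sub, map_smul, gX_apply, gX_apply]
    rw [sub_sub, ← add_smul]
    rw [show ((↑(i+1) : K)/2) = (↑i/2 + 1/2 : K) by push_cast; ring]
  · have hj' : j = M - 1 := by omega
    subst hj'
    rw [gY_apply2 K N M a hM, gY_apply2 K N M a hM, map_sub, map_smul, map_smul,
      gX_apply, gX_apply]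
    rw [sub_sub, ← add_smul]
    rw [show ((↑(i+1) : K)/2) = (↑i/2 + 1/2 : K) by push_cast; ring]
    rw [show i + M + 1 = i + 1 + M from by omega]

theorem gRelX : (gX K N M) ^ N = 0 := by
  apply Finsupp.lhom_ext
  intro q b
  have hb : Finsupp.single q b = b • Finsupp.single q (1 : K) := by
    rw [Finsupp.smul_single, smul_eq_mul, mul_one]
  rw [hb, map_smul, single_eq_gE, gX_pow, gE_zero K N M (Or.inl (by omega)), smul_zero,
    LinearMap.zero_apply]

end Model

section ModelYM
variable {K : Type*} [Field K] {N M : ℕ} (a : K)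

theorem gYpow0 (s j : ℕ) (h : j + s < M) :
    ((gY K N M a) ^ s) (gE K N M 0 j) = gE K N M 0 (j + s) := by
  induction s generalizing j with
  | zero => simp
  | succ s ih =>
    rw [pow_succ, Module.End.mul_apply, gY_apply1 K N M a (by omega),
      Nat.cast_zero, zero_div, zero_smul, sub_zero, ih (j+1) (by omega)]
    congr 1
    omega

theorem gYpowM (hMK : (M : K) = 0) (s j : ℕ) (h : j + s < M) :
    ((gY K N M a) ^ s) (gE K N M M j) = gE K N M M (j + s) := by
  induction s generalizing j with
  | zero => simp
  | succ s ih =>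
    rw [pow_succ, Module.End.mul_apply, gY_apply1 K N M a (by omega),
      hMK, zero_div, zero_smul, sub_zero, ih (j+1) (by omega)]
    congr 1
    omega

theorem gYM (p : ℕ) [Fact p.Prime] [CharP K p] (k : ℕ) (hk : 1 ≤ k) (hM : M = p ^ k)
    (hN : 0 < N) : (gY K N M a) ^ M = a • (gX K N M) ^ M := by
  have hppos : 0 < p := (Fact.out : p.Prime).pos
  have hM0 : 0 < M := by rw [hM]; positivity
  have hMK : (M : K) = 0 := by
    rw [CharP.cast_eq_zero_iff K p]
    rw [hM]
    exact dvd_pow_self p (by omega)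
  have he00 : gE K N M 0 0 ≠ 0 := by
    rw [gE_eq K N M hN hM0]
    exact fun hcon => one_ne_zero (Finsupp.single_eq_zero.mp hcon)
  haveI : Nontrivial (Module.End K ((Fin N × Fin M) →₀ K)) := by
    refine ⟨1, 0, fun hcon => he00 ?_⟩
    have := congrArg (fun f => f (gE K N M 0 0)) hcon
    simpa using this
  have hcom : Commute (gX K N M) ((gY K N M a) ^ p ^ k) :=
    gaux_comm_pow (X := gX K N M) (Y := gY K N M a) (p := p) (gRel1 K N M a hM0) k hk
  rw [← hM] at hcom
  apply Finsupp.lhom_ext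
  intro q b
  obtain ⟨⟨i, hiN⟩, ⟨j, hjM⟩⟩ := q
  have hb : Finsupp.single ((⟨i, hiN⟩ : Fin N), (⟨j, hjM⟩ : Fin M)) b
      = b • Finsupp.single ((⟨i, hiN⟩ : Fin N), (⟨j, hjM⟩ : Fin M)) (1 : K) := by
    rw [Finsupp.smul_single, smul_eq_mul, mul_one]
  rw [hb, map_smul, map_smul, ← gE_eq K N M hiN hjM]
  congr 1
  have h1 : gE K N M i j = ((gX K N M)^i) (gE K N M 0 j) := by
    rw [gX_pow, zero_add]
  have hY0 : ((gY K N M a)^M) (gE K N M 0 j) = a • gE K N M M j := by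
    rw [show (gY K N M a)^M = (gY K N M a)^j * (gY K N M a * (gY K N M a)^(M-1-j)) from by
      rw [← pow_succ', ← pow_add]; congr 1; omega]
    rw [Module.End.mul_apply, Module.End.mul_apply, gYpow0 a (M-1-j) j (by omega),
      show j + (M-1-j) = M-1 from by omega, gY_apply2 K N M a hM0,
      Nat.cast_zero, zero_div, zero_smul, sub_zero, zero_add, map_smul,
      gYpowM a hMK j 0 (by omega), zero_add]
  calc ((gY K N M a)^M) (gE K N M i j)
      = ((gY K N M a)^M * (gX K N M)^i) (gE K N M 0 j) := by
        rw [Module.End.mul_apply, ← h1]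
    _ = ((gX K N M)^i * (gY K N M a)^M) (gE K N M 0 j) := by
        rw [((hcom.pow_left i).symm).eq]
    _ = ((gX K N M)^i) (a • gE K N M M j) := by rw [Module.End.mul_apply, hY0]
    _ = a • gE K N M (i+M) j := by rw [map_smul, gX_pow, add_comm M i]
    _ = (a • (gX K N M)^M) (gE K N M i j) := by
        rw [LinearMap.smul_apply, gX_pow]

end ModelYM

/-- Defining relations of
`G(k,ℓ,a) = k⟨x,y⟩/(yx - xy + (1/2)x², y^{p^k} - a x^{p^k}, x^{p^ℓ})`,
with `x = ι 0`, `y = ι 1`. -/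
inductive GRel (K : Type*) [Field K] (p k ℓ : ℕ) (a : K) :
    FreeAlgebra K (Fin 2) → FreeAlgebra K (Fin 2) → Prop
  | comm : GRel K p k ℓ a (FreeAlgebra.ι K (1 : Fin 2) * FreeAlgebra.ι K (0 : Fin 2))
      (FreeAlgebra.ι K (0 : Fin 2) * FreeAlgebra.ι K (1 : Fin 2)
        - (1/2 : K) • (FreeAlgebra.ι K (0 : Fin 2)) ^ 2)
  | ypk : GRel K p k ℓ a ((FreeAlgebra.ι K (1 : Fin 2)) ^ p ^ k)
      (a • (FreeAlgebra.ι K (0 : Fin 2)) ^ p ^ k)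
  | xpl : GRel K p k ℓ a ((FreeAlgebra.ι K (0 : Fin 2)) ^ p ^ ℓ) 0

/-- For `k, ℓ ∈ ℕ` and `a ∈ K` (char `K = p > 2`), the algebra `G(k,ℓ,a)` has linear basis
`{x^i y^j : 0 ≤ i ≤ p^ℓ - 1, 0 ≤ j ≤ p^k - 1}`, hence dimension `p^{k+ℓ}`. -/
theorem stmt17 (p : ℕ) [Fact p.Prime] (hp2 : 2 < p) (K : Type*) [Field K] [CharP K p]
    (k ℓ : ℕ) (hk : 1 ≤ k) (hl : 1 ≤ ℓ) (a : K) :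
    (∃ b : Module.Basis (Fin (p ^ ℓ) × Fin (p ^ k)) K (RingQuot (GRel K p k ℓ a)),
      ∀ ij : Fin (p ^ ℓ) × Fin (p ^ k), b ij =
        (RingQuot.mkAlgHom K (GRel K p k ℓ a) (FreeAlgebra.ι K (0 : Fin 2))) ^ (ij.1 : ℕ) *
        (RingQuot.mkAlgHom K (GRel K p k ℓ a) (FreeAlgebra.ι K (1 : Fin 2))) ^ (ij.2 : ℕ)) ∧
    Module.finrank K (RingQuot (GRel K p k ℓ a)) = p ^ (k + ℓ) := by
  classical
  have hp : p.Prime := Fact.out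
  have hN0 : 0 < p ^ ℓ := pow_pos hp.pos ℓ
  have hM0 : 0 < p ^ k := pow_pos hp.pos k
  set rel := GRel K p k ℓ a with hrel
  set mkx := RingQuot.mkAlgHom K rel (FreeAlgebra.ι K (0 : Fin 2)) with hmkx
  set mky := RingQuot.mkAlgHom K rel (FreeAlgebra.ι K (1 : Fin 2)) with hmky
  -- relations in the quotient
  have hYX : mky * mkx = mkx * mky - (1/2 : K) • mkx ^ 2 := by
    have h := RingQuot.mkAlgHom_rel K (GRel.comm (K := K) (p := p) (k := k) (ℓ := ℓ) (a := a))
    rw [map_mul, map_sub, map_mul, map_smul, map_pow] at h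
    exact h
  have hYM : mky ^ p ^ k = a • mkx ^ p ^ k := by
    have h := RingQuot.mkAlgHom_rel K (GRel.ypk (K := K) (p := p) (k := k) (ℓ := ℓ) (a := a))
    rw [map_pow, map_smul, map_pow] at h
    exact h
  have hXN : mkx ^ p ^ ℓ = 0 := by
    have h := RingQuot.mkAlgHom_rel K (GRel.xpl (K := K) (p := p) (k := k) (ℓ := ℓ) (a := a))
    rw [map_pow, map_zero] at h
    exact h
  -- representation on the model space
  set φ0 : FreeAlgebra K (Fin 2) →ₐ[K]
      Module.End K ((Fin (p^ℓ) × Fin (p^k)) →₀ K) :=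
    FreeAlgebra.lift K ![gX K (p^ℓ) (p^k), gY K (p^ℓ) (p^k) a] with hφ0
  have hφ0x : φ0 (FreeAlgebra.ι K (0 : Fin 2)) = gX K (p^ℓ) (p^k) := by
    rw [hφ0, FreeAlgebra.lift_ι_apply]
    simp
  have hφ0y : φ0 (FreeAlgebra.ι K (1 : Fin 2)) = gY K (p^ℓ) (p^k) a := by
    rw [hφ0, FreeAlgebra.lift_ι_apply]
    simp
  have hresp : ∀ ⦃u w⦄, rel u w → φ0 u = φ0 w := by
    intro u w h
    cases h with
    | comm =>
      rw [map_mul, map_sub, map_mul, map_smul, map_pow, hφ0x, hφ0y]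
      exact gRel1 K (p^ℓ) (p^k) a hM0
    | ypk =>
      rw [map_pow, map_smul, map_pow, hφ0x, hφ0y]
      exact gYM a p k hk rfl hN0
    | xpl =>
      rw [map_pow, map_zero, hφ0x]
      exact gRelX K (p^ℓ) (p^k)
  set φ := RingQuot.liftAlgHom K ⟨φ0, hresp⟩ with hφ
  have hφx : φ mkx = gX K (p^ℓ) (p^k) := by
    rw [hφ, hmkx, RingQuot.liftAlgHom_mkAlgHom_apply, hφ0x]
  have hφy : φ mky = gY K (p^ℓ) (p^k) a := by
    rw [hφ, hmky, RingQuot.liftAlgHom_mkAlgHom_apply, hφ0y]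
  -- the candidate basis family
  set v : Fin (p^ℓ) × Fin (p^k) → RingQuot rel :=
    fun q => mkx ^ (q.1 : ℕ) * mky ^ (q.2 : ℕ) with hv
  -- evaluation at the cyclic vector
  set E : RingQuot rel →ₗ[K] ((Fin (p^ℓ) × Fin (p^k)) →₀ K) :=
    { toFun := fun r => φ r (gE K (p^ℓ) (p^k) 0 0)
      map_add' := fun r s => by simp only [map_add, LinearMap.add_apply]
      map_smul' := fun c r => by simp only [map_smul, LinearMap.smul_apply, RingHom.id_apply] } with hE
  have hEv : ∀ q, E (v q) = Finsupp.single q (1 : K) := by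
    rintro ⟨⟨i, hi⟩, ⟨j, hj⟩⟩
    show φ (mkx ^ i * mky ^ j) (gE K (p^ℓ) (p^k) 0 0) = _
    rw [map_mul, map_pow, map_pow, hφx, hφy, Module.End.mul_apply,
      gYpow0 a j 0 (by omega), zero_add, gX_pow, zero_add, gE_eq K (p^ℓ) (p^k) hi hj]
  have hli : LinearIndependent K v := by
    have h2 : LinearIndependent K
        (fun q : Fin (p^ℓ) × Fin (p^k) => Finsupp.single q (1 : K)) := by
      have := (Finsupp.basisSingleOne (R := K) (ι := Fin (p^ℓ) × Fin (p^k))).linearIndependent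
      rwa [Finsupp.coe_basisSingleOne] at this
    apply LinearIndependent.of_comp E
    have hcomp : (⇑E ∘ v) = fun q => Finsupp.single q (1 : K) := funext hEv
    rw [hcomp]
    exact h2
  -- spanning
  set S := Submodule.span K (Set.range v) with hS
  have hspan : ∀ (i j : ℕ), j < p^k → mkx ^ i * mky ^ j ∈ S := by
    intro i j hj
    by_cases hi : i < p ^ ℓ
    · exact Submodule.subset_span ⟨(⟨i, hi⟩, ⟨j, hj⟩), rfl⟩
    · rw [show i = p^ℓ + (i - p^ℓ) from by omega, pow_add, hXN, zero_mul, zero_mul]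
      exact Submodule.zero_mem _
  have hxc : ∀ s ∈ S, mkx * s ∈ S := by
    intro s hs
    induction hs using Submodule.span_induction with
    | mem u hu =>
      obtain ⟨q, rfl⟩ := hu
      rw [hv, ← mul_assoc, ← pow_succ']
      exact hspan _ _ q.2.isLt
    | zero => rw [mul_zero]; exact Submodule.zero_mem _
    | add x y hx hy ihx ihy => rw [mul_add]; exact Submodule.add_mem _ ihx ihy
    | smul c x hx ih => rw [mul_smul_comm]; exact Submodule.smul_mem _ _ ih
  have hyc : ∀ s ∈ S, mky * s ∈ S := by
    intro s hs
    induction hs using Submodule.span_induction with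
    | mem u hu =>
      obtain ⟨q, rfl⟩ := hu
      rw [hv]
      rw [← mul_assoc, gaux1 hYX (q.1 : ℕ), sub_mul, smul_mul_assoc, mul_assoc, ← pow_succ']
      refine Submodule.sub_mem _ ?_ (Submodule.smul_mem _ _ (hspan _ _ q.2.isLt))
      by_cases hj : (q.2 : ℕ) + 1 < p ^ k
      · exact hspan _ _ hj
      · have hj' : (q.2 : ℕ) + 1 = p ^ k := by omega
        rw [hj', hYM, mul_smul_comm, ← pow_add]
        refine Submodule.smul_mem _ _ ?_
        have := hspan ((q.1 : ℕ) + p ^ k) 0 hM0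
        rwa [pow_zero, mul_one] at this
    | zero => rw [mul_zero]; exact Submodule.zero_mem _
    | add x y hx hy ihx ihy => rw [mul_add]; exact Submodule.add_mem _ ihx ihy
    | smul c x hx ih => rw [mul_smul_comm]; exact Submodule.smul_mem _ _ ih
  -- the set of elements whose left multiplication preserves S is a subalgebra
  set T : Subalgebra K (RingQuot rel) :=
    { carrier := {r | ∀ s ∈ S, r * s ∈ S}
      mul_mem' := fun {r1 r2} h1 h2 s hs => by
        rw [mul_assoc]; exact h1 _ (h2 _ hs)
      one_mem' := fun s hs => by rwa [one_mul]
      add_mem' := fun {r1 r2} h1 h2 s hs => by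
        rw [add_mul]; exact Submodule.add_mem _ (h1 s hs) (h2 s hs)
      algebraMap_mem' := fun c s hs => by
        rw [← Algebra.smul_def]; exact Submodule.smul_mem _ _ hs } with hT
  have hTtop : ∀ r : RingQuot rel, r ∈ T := by
    have htop : Algebra.adjoin K
        (Set.range fun n : Fin 2 => RingQuot.mkAlgHom K rel (FreeAlgebra.ι K n)) = ⊤ := by
      have h1 : (Set.range fun n : Fin 2 => RingQuot.mkAlgHom K rel (FreeAlgebra.ι K n))
          = (RingQuot.mkAlgHom K rel) '' (Set.range (FreeAlgebra.ι K)) := by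
        rw [← Set.range_comp]; rfl
      rw [h1, ← AlgHom.map_adjoin, FreeAlgebra.adjoin_range_ι, Algebra.map_top,
        AlgHom.range_eq_top]
      exact RingQuot.mkAlgHom_surjective K rel
    intro r
    have hle : Algebra.adjoin K
        (Set.range fun n : Fin 2 => RingQuot.mkAlgHom K rel (FreeAlgebra.ι K n)) ≤ T := by
      apply Algebra.adjoin_le
      rintro _ ⟨n, rfl⟩
      fin_cases n
      · exact hxc
      · exact hyc
    exact hle (htop ▸ Algebra.mem_top)
  have h1S : (1 : RingQuot rel) ∈ S := by
    have := hspan 0 0 hM0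
    rwa [pow_zero, pow_zero, mul_one] at this
  have hStop : ⊤ ≤ S := by
    intro r _
    have := hTtop r 1 h1S
    rwa [mul_one] at this
  -- assemble the basis
  let b : Module.Basis (Fin (p^ℓ) × Fin (p^k)) K (RingQuot rel) := Module.Basis.mk hli hStop
  constructor
  · exact ⟨b, fun ij => by rw [Module.Basis.mk_apply]⟩
  · rw [Module.finrank_eq_card_basis b, Fintype.card_prod, Fintype.card_fin, Fintype.card_fin,
      ← pow_add, add_comm ℓ k]
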